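/- Let R be a ring, θ and η additive invariants on finite-length R-modules, and T a finite-length R-module. Let X' ⊆ T be the submodule with X' in 𝓘_θ and T/X' in 𝓟̄_θ, and X'' ⊆ T the submodule with X'' in 𝓘̄_θ and T/X'' in 𝓟_θ. Suppose T' and T'' are submodules with X' ⊆ T' ⊆ T'' ⊆ X'' such that: θ(T') = θ(X') and θ(T'') = θ(X'); every nonzero quotient Q of T'/X' with θ(Q) = 0 satisfies η(Q) > 0; every submodule S of X''/T' with θ(S) = 0 satisfies η(S) ≤ 0; every nonzero quotient Q of T''/X' with θ(Q) = 0 satisfies η(Q) ≥ 0; and every nonzero submodule S of X''/T'' with θ(S) = 0 satisfies η(S) < 0. Then there exists M ∈ ℝ such that for all m ≥ M: T' lies in 𝓘_{mθ+η} and T/T' lies in 𝓟̄_{mθ+η}, and T'' lies in 𝓘̄_{mθ+η} and T/T'' lies in 𝓟_{mθ+η} (that is, T' = T^min_{mθ+η} and T'' = T^max_{mθ+η}). -/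

import Mathlib

universe u

/-- An *additive invariant* on finite-length modules over a ring `R`: an assignment of a real
number to every module (whose value is only constrained on finite-length modules) that is
invariant under isomorphism and additive in short exact sequences. -/
structure AdditiveInvariant (R : Type u) [Ring R] where
  /-- The value of the invariant on a module. -/
  val : (M : Type u) → [AddCommGroup M] → [Module R M] → ℝ
  /-- Isomorphism invariance on finite-length modules. -/
  iso_inv : ∀ (M N : Type u) [AddCommGroup M] [Module R M] [AddCommGroup N] [Module R N],
    IsFiniteLength R M → (M ≃ₗ[R] N) → val M = val N
  /-- Additivity with respect to submodules and quotients, on finite-length modules. -/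
  additive : ∀ (M : Type u) [AddCommGroup M] [Module R M], IsFiniteLength R M →
    ∀ N : Submodule R M, val M = val N + val (M ⧸ N)

variable {R : Type u} [Ring R]

/-- `M` lies in `𝓘_θ`: every nonzero quotient `Q` of `M` satisfies `θ(Q) > 0`. -/
def MemI (θ : AdditiveInvariant R) (M : Type u) [AddCommGroup M] [Module R M] : Prop :=
  ∀ N : Submodule R M, N ≠ ⊤ → 0 < θ.val (M ⧸ N)

/-- `M` lies in `𝓘̄_θ`: every nonzero quotient `Q` of `M` satisfies `θ(Q) ≥ 0`. -/
def MemIbar (θ : AdditiveInvariant R) (M : Type u) [AddCommGroup M] [Module R M] : Prop :=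
  ∀ N : Submodule R M, N ≠ ⊤ → 0 ≤ θ.val (M ⧸ N)

/-- `M` lies in `𝓟_θ`: every nonzero submodule `X` of `M` satisfies `θ(X) < 0`. -/
def MemP (θ : AdditiveInvariant R) (M : Type u) [AddCommGroup M] [Module R M] : Prop :=
  ∀ X : Submodule R M, X ≠ ⊥ → θ.val X < 0

/-- `M` lies in `𝓟̄_θ`: every nonzero submodule `X` of `M` satisfies `θ(X) ≤ 0`. -/
def MemPbar (θ : AdditiveInvariant R) (M : Type u) [AddCommGroup M] [Module R M] : Prop :=
  ∀ X : Submodule R M, X ≠ ⊥ → θ.val X ≤ 0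

/-- `M` is `θ`-semistable: `θ(M) = 0` and every submodule `X` of `M` satisfies `θ(X) ≤ 0`. -/
def Semistable (θ : AdditiveInvariant R) (M : Type u) [AddCommGroup M] [Module R M] : Prop :=
  θ.val M = 0 ∧ ∀ X : Submodule R M, θ.val X ≤ 0

/-- The additive invariant `m·θ + η`. -/
noncomputable def AdditiveInvariant.smulAdd (m : ℝ) (θ η : AdditiveInvariant R) :
    AdditiveInvariant R where
  val M _ _ := m * θ.val M + η.val M
  iso_inv M N _ _ _ _ hM e := by
    rw [θ.iso_inv M N hM e, η.iso_inv M N hM e]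
  additive M _ _ hM N := by
    rw [θ.additive M hM N, η.additive M hM N]; ring


section PerturbAux

lemma AuxFL.sub {M : Type u} [AddCommGroup M] [Module R M] (hM : IsFiniteLength R M)
    (N : Submodule R M) : IsFiniteLength R N := by
  rw [isFiniteLength_iff_isNoetherian_isArtinian] at hM ⊢
  haveI := hM.1; haveI := hM.2
  exact ⟨inferInstance, inferInstance⟩

lemma AuxFL.quot {M : Type u} [AddCommGroup M] [Module R M] (hM : IsFiniteLength R M)
    (N : Submodule R M) : IsFiniteLength R (M ⧸ N) := by
  rw [isFiniteLength_iff_isNoetherian_isArtinian] at hM ⊢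
  haveI := hM.1; haveI := hM.2
  exact ⟨inferInstance, inferInstance⟩

lemma AuxVal.zero (θ : AdditiveInvariant R) (M : Type u) [AddCommGroup M] [Module R M]
    [Subsingleton M] : θ.val M = 0 := by
  haveI : Subsingleton (↥(⊥ : Submodule R M)) :=
    ⟨fun a b => Subtype.ext (Subsingleton.elim _ _)⟩
  have h := θ.additive M .of_subsingleton ⊥
  have e1 : (↥(⊥ : Submodule R M)) ≃ₗ[R] M := LinearEquiv.ofSubsingleton _ _
  have e2 : (M ⧸ (⊥ : Submodule R M)) ≃ₗ[R] M := Submodule.quotEquivOfEqBot _ rfl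
  rw [θ.iso_inv _ _ .of_subsingleton e1,
    θ.iso_inv _ _ (AuxFL.quot .of_subsingleton ⊥) e2] at h
  linarith

lemma AuxVal.congr (θ : AdditiveInvariant R) {M N : Type u} [AddCommGroup M] [Module R M]
    [AddCommGroup N] [Module R N] (hM : IsFiniteLength R M) (e : M ≃ₗ[R] N) :
    θ.val M = θ.val N := θ.iso_inv M N hM e

lemma AuxVal.bot (θ : AdditiveInvariant R) (M : Type u) [AddCommGroup M] [Module R M] :
    θ.val (↥(⊥ : Submodule R M)) = 0 := by
  haveI : Subsingleton (↥(⊥ : Submodule R M)) :=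
    ⟨fun a b => Subtype.ext (by rw [(Submodule.mem_bot R).mp a.2, (Submodule.mem_bot R).mp b.2])⟩
  exact AuxVal.zero θ _

lemma AuxVal.comapSubtype (θ : AdditiveInvariant R) {M : Type u} [AddCommGroup M] [Module R M]
    (hM : IsFiniteLength R M) {A C : Submodule R M} (h : A ≤ C) :
    θ.val (Submodule.comap C.subtype A) = θ.val A :=
  AuxVal.congr θ (AuxFL.sub (AuxFL.sub hM C) _) (Submodule.comapSubtypeEquivOfLe h)

lemma AuxVal.quot (θ : AdditiveInvariant R) {M : Type u} [AddCommGroup M] [Module R M]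
    (hM : IsFiniteLength R M) {A B : Submodule R M} (h : A ≤ B) :
    θ.val (↥B ⧸ Submodule.comap B.subtype A) = θ.val B - θ.val A := by
  have h2 := θ.additive B (AuxFL.sub hM B) (Submodule.comap B.subtype A)
  rw [AuxVal.comapSubtype θ hM h] at h2
  linarith

lemma AuxVal.quotTop (θ : AdditiveInvariant R) {M : Type u} [AddCommGroup M] [Module R M]
    (hM : IsFiniteLength R M) (N : Submodule R M) :
    θ.val (M ⧸ N) = θ.val M - θ.val N := by
  have := θ.additive M hM N; linarith

lemma AuxLe.comapMkQ {M : Type u} [AddCommGroup M] [Module R M] (P : Submodule R M)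
    (X : Submodule R (M ⧸ P)) : P ≤ Submodule.comap P.mkQ X := by
  intro x hx
  show P.mkQ x ∈ X
  have h0 : P.mkQ x = 0 := (Submodule.Quotient.mk_eq_zero P).mpr hx
  rw [h0]; exact X.zero_mem

lemma AuxVal.subQuot (θ : AdditiveInvariant R) {M : Type u} [AddCommGroup M] [Module R M]
    (hM : IsFiniteLength R M) (T₀ : Submodule R M) (X : Submodule R (M ⧸ T₀)) :
    θ.val X = θ.val (Submodule.comap T₀.mkQ X) - θ.val T₀ := by
  set W := Submodule.comap T₀.mkQ X with hW
  have hTW : T₀ ≤ W := AuxLe.comapMkQ T₀ X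
  set f : ↥W →ₗ[R] M ⧸ T₀ := T₀.mkQ.comp W.subtype with hf
  have hker : LinearMap.ker f = Submodule.comap W.subtype T₀ := by
    rw [hf, LinearMap.ker_comp, Submodule.ker_mkQ]
  have hrange : LinearMap.range f = X := by
    rw [hf, LinearMap.range_comp, Submodule.range_subtype, hW,
      Submodule.map_comap_eq_of_surjective (Submodule.mkQ_surjective T₀)]
  have e : (↥W ⧸ Submodule.comap W.subtype T₀) ≃ₗ[R] ↥X :=
    ((Submodule.quotEquivOfEq _ _ hker.symm).trans f.quotKerEquivRange).trans
      (LinearEquiv.ofEq _ _ hrange)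
  rw [← AuxVal.congr θ (AuxFL.quot (AuxFL.sub hM W) _) e, AuxVal.quot θ hM hTW]

lemma AuxVal.infSup (θ : AdditiveInvariant R) {M : Type u} [AddCommGroup M] [Module R M]
    (hM : IsFiniteLength R M) (p p' : Submodule R M) :
    θ.val p + θ.val p' = θ.val (↥(p ⊓ p')) + θ.val (↥(p ⊔ p')) := by
  have h1 := AuxVal.quot θ hM (inf_le_left : p ⊓ p' ≤ p)
  have h2 := AuxVal.quot θ hM (le_sup_right : p' ≤ p ⊔ p')
  have h3 := AuxVal.congr θ (AuxFL.quot (AuxFL.sub hM p) _)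
    (LinearMap.quotientInfEquivSupQuotient p p')
  rw [← Submodule.comap_inf] at h3
  linarith

lemma AuxVal.range_finite (θ : AdditiveInvariant R) {M : Type u} [AddCommGroup M] [Module R M]
    (hM : IsFiniteLength R M) :
    (Set.range fun K : Submodule R M => θ.val K).Finite := by
  induction' hM with M' i1 i2 i3 M' i1 i2 N i4 hN ih
  · haveI := i3
    refine Set.Finite.subset (Set.finite_singleton 0) ?_
    rintro x ⟨K, rfl⟩
    haveI : Subsingleton ↥K := ⟨fun a b => Subtype.ext (Subsingleton.elim _ _)⟩
    exact AuxVal.zero θ _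
  · haveI := i4
    have hMfl : IsFiniteLength R M' := .of_simple_quotient hN
    have hcoatom : IsCoatom N := isSimpleModule_iff_isCoatom.mp i4
    refine Set.Finite.subset (ih.union (ih.image (fun x => x + θ.val (M' ⧸ N)))) ?_
    rintro x ⟨K, rfl⟩
    show θ.val ↥K ∈ _
    have hKN : θ.val (↥(K ⊓ N)) = θ.val (Submodule.comap N.subtype (K ⊓ N)) :=
      (AuxVal.comapSubtype θ hMfl inf_le_right).symm
    have hmem : θ.val (↥(K ⊓ N)) ∈ Set.range fun P : Submodule R ↥N => θ.val P :=
      ⟨Submodule.comap N.subtype (K ⊓ N), hKN.symm⟩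
    have hsum := AuxVal.infSup θ hMfl K N
    by_cases hKle : K ≤ N
    · left
      have hs : K ⊔ N = N := sup_eq_right.mpr hKle
      rw [hs] at hsum
      have hK : θ.val ↥K = θ.val (↥(K ⊓ N)) := by linarith only [hsum]
      rw [hK]; exact hmem
    · right
      have hlt : N < K ⊔ N := lt_of_le_of_ne le_sup_right
        (fun h => hKle (sup_eq_right.mp h.symm))
      have htop : K ⊔ N = ⊤ := hcoatom.2 _ hlt
      rw [htop] at hsum
      have hTv : θ.val (↥(⊤ : Submodule R M')) = θ.val M' :=
        AuxVal.congr θ (AuxFL.sub hMfl ⊤) Submodule.topEquiv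
      have hc : θ.val (M' ⧸ N) = θ.val M' - θ.val N := AuxVal.quotTop θ hMfl N
      exact ⟨θ.val (↥(K ⊓ N)), hmem,
        show θ.val (↥(K ⊓ N)) + θ.val (M' ⧸ N) = θ.val ↥K by linarith only [hsum, hTv, hc]⟩

lemma aux_exists_pos_lb (S : Set ℝ) (hS : S.Finite) :
    ∃ ε : ℝ, 0 < ε ∧ ∀ x ∈ S, 0 < x → ε ≤ x := by
  classical
  by_cases h : (hS.toFinset.filter (fun x => 0 < x)).Nonempty
  · refine ⟨(hS.toFinset.filter (fun x => 0 < x)).min' h, ?_, ?_⟩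
    · exact (Finset.mem_filter.mp (Finset.min'_mem _ h)).2
    · intro x hx hxp
      exact Finset.min'_le _ _ (Finset.mem_filter.mpr ⟨hS.mem_toFinset.mpr hx, hxp⟩)
  · exact ⟨1, one_pos, fun x hx hxp =>
      absurd ⟨x, Finset.mem_filter.mpr ⟨hS.mem_toFinset.mpr hx, hxp⟩⟩ h⟩

lemma aux_exists_abs_ub (S : Set ℝ) (hS : S.Finite) :
    ∃ C : ℝ, 0 ≤ C ∧ ∀ x ∈ S, |x| ≤ C := by
  classical
  refine ⟨(insert (0:ℝ) (hS.toFinset.image (fun x => |x|))).max'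
      ⟨0, Finset.mem_insert_self _ _⟩, ?_, ?_⟩
  · exact Finset.le_max' _ 0 (Finset.mem_insert_self _ _)
  · intro x hx
    exact Finset.le_max' _ _
      (Finset.mem_insert_of_mem (Finset.mem_image_of_mem _ (hS.mem_toFinset.mpr hx)))

end PerturbAux

/-- **Proposition (Proposition `pr:SubfacPert`, perturbation of the stability parameter).**
Let `X' = T_θ^min`, `X'' = T_θ^max`, and let `T' ⊆ T''` be submodules between `X'` and
`X''` such that `θ(T') = θ(T'') = θ(X')`, every nonzero quotient `Q` of `T'/X'` with
`θ(Q) = 0` has `η(Q) > 0`, every submodule `S` of `X''/T'` with `θ(S) = 0` has `η(S) ≤ 0`,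
every nonzero quotient `Q` of `T''/X'` with `θ(Q) = 0` has `η(Q) ≥ 0`, and every nonzero
submodule `S` of `X''/T''` with `θ(S) = 0` has `η(S) < 0`. Then for all sufficiently large
`m`, one has `T' = T^min_{mθ+η}` and `T'' = T^max_{mθ+η}`. -/
theorem perturbation_min_max (R : Type u) [Ring R] (θ η : AdditiveInvariant R)
    (T : Type u) [AddCommGroup T] [Module R T] (hT : IsFiniteLength R T)
    (X' X'' T' T'' : Submodule R T)
    (hX'I : MemI θ X') (hX'P : MemPbar θ (T ⧸ X'))
    (hX''I : MemIbar θ X'') (hX''P : MemP θ (T ⧸ X''))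
    (h1 : X' ≤ T') (h2 : T' ≤ T'') (h3 : T'' ≤ X'')
    (hθT' : θ.val T' = θ.val X') (hθT'' : θ.val T'' = θ.val X')
    (hmin : ∀ N : Submodule R (T' ⧸ Submodule.comap T'.subtype X'), N ≠ ⊤ →
      θ.val ((T' ⧸ Submodule.comap T'.subtype X') ⧸ N) = 0 →
      0 < η.val ((T' ⧸ Submodule.comap T'.subtype X') ⧸ N))
    (hmin' : ∀ S : Submodule R (X'' ⧸ Submodule.comap X''.subtype T'),
      θ.val S = 0 → η.val S ≤ 0)
    (hmax : ∀ N : Submodule R (T'' ⧸ Submodule.comap T''.subtype X'), N ≠ ⊤ →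
      θ.val ((T'' ⧸ Submodule.comap T''.subtype X') ⧸ N) = 0 →
      0 ≤ η.val ((T'' ⧸ Submodule.comap T''.subtype X') ⧸ N))
    (hmax' : ∀ S : Submodule R (X'' ⧸ Submodule.comap X''.subtype T''), S ≠ ⊥ →
      θ.val S = 0 → η.val S < 0) :
    ∃ M₀ : ℝ, ∀ m : ℝ, M₀ ≤ m →
      MemI (AdditiveInvariant.smulAdd m θ η) T' ∧
      MemPbar (AdditiveInvariant.smulAdd m θ η) (T ⧸ T') ∧
      MemIbar (AdditiveInvariant.smulAdd m θ η) T'' ∧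
      MemP (AdditiveInvariant.smulAdd m θ η) (T ⧸ T'') := by

  classical
  -- values of θ and η on submodules of T form finite sets
  obtain ⟨ε, hε, hεlb⟩ := aux_exists_pos_lb
    (Set.image2 (fun a b : ℝ => a - b) (Set.range fun K : Submodule R T => θ.val K)
      (Set.range fun K : Submodule R T => θ.val K))
    (Set.Finite.image2 _ (AuxVal.range_finite θ hT) (AuxVal.range_finite θ hT))
  obtain ⟨C, hC, hCub⟩ := aux_exists_abs_ub
    (Set.image2 (fun a b : ℝ => a - b) (Set.range fun K : Submodule R T => η.val K)
      (Set.range fun K : Submodule R T => η.val K))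
    (Set.Finite.image2 _ (AuxVal.range_finite η hT) (AuxVal.range_finite η hT))
  have hεlb' : ∀ A B : Submodule R T, 0 < θ.val A - θ.val B → ε ≤ θ.val A - θ.val B :=
    fun A B h => hεlb _ (Set.mem_image2_of_mem ⟨A, rfl⟩ ⟨B, rfl⟩) h
  have hCub' : ∀ A B : Submodule R T, |η.val A - η.val B| ≤ C :=
    fun A B => hCub _ (Set.mem_image2_of_mem ⟨A, rfl⟩ ⟨B, rfl⟩)
  have hX'leX'' : X' ≤ X'' := h1.trans (h2.trans h3)
  -- value of a submodule of a quotient of T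
  have hmapval : ∀ (κ : AdditiveInvariant R) (T₀ B : Submodule R T),
      κ.val (↥(Submodule.map T₀.mkQ B)) = κ.val (↥(T₀ ⊔ B)) - κ.val T₀ := by
    intro κ T₀ B
    rw [AuxVal.subQuot κ hT T₀ (Submodule.map T₀.mkQ B), Submodule.comap_map_mkQ]
  -- value of a quotient of a submodule of T
  have hquotSubVal : ∀ (P : Submodule R T) (N : Submodule R ↥P) (κ : AdditiveInvariant R),
      κ.val (↥P ⧸ N) = κ.val P - κ.val (↥(Submodule.map P.subtype N)) := by
    intro P N κ
    have hB : Submodule.comap P.subtype (Submodule.map P.subtype N) = N := by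
      rw [Submodule.comap_map_eq, Submodule.ker_subtype, sup_bot_eq]
    conv_lhs => rw [← hB]
    exact AuxVal.quot κ hT (Submodule.map_subtype_le P N)
  -- Claim A : every submodule has θ-value at most θ(X'), with equality only above X'
  have claimA : ∀ B : Submodule R T, θ.val B ≤ θ.val X' ∧ (θ.val B = θ.val X' → X' ≤ B) := by
    intro B
    have hsum := AuxVal.infSup θ hT X' B
    have hβ : θ.val (↥(X' ⊔ B)) - θ.val X' ≤ 0 := by
      by_cases hb : Submodule.map X'.mkQ B = ⊥
      · have hz : θ.val (↥(Submodule.map X'.mkQ B)) = 0 := by rw [hb]; exact AuxVal.bot θ _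
        rw [hmapval θ X' B] at hz; linarith
      · have hz := hX'P _ hb
        rw [hmapval θ X' B] at hz; linarith
    by_cases hXB : X' ≤ B
    · have hinf : X' ⊓ B = X' := inf_eq_left.mpr hXB
      rw [hinf] at hsum
      exact ⟨by linarith only [hsum, hβ], fun _ => hXB⟩
    · have hne : Submodule.comap X'.subtype (X' ⊓ B) ≠ ⊤ := by
        intro h
        exact hXB (le_trans (Submodule.comap_subtype_eq_top.mp h) inf_le_right)
      have hq := hX'I _ hne
      rw [AuxVal.quot θ hT (inf_le_left : X' ⊓ B ≤ X')] at hq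
      exact ⟨by linarith only [hsum, hβ, hq],
        fun heq => False.elim (by linarith only [hsum, hβ, hq, heq])⟩
  -- Claim B : every submodule has θ-value at most θ(X''), with equality only below X''
  have claimB : ∀ W : Submodule R T, θ.val W ≤ θ.val X'' ∧ (θ.val W = θ.val X'' → W ≤ X'') := by
    intro W
    have hsum := AuxVal.infSup θ hT X'' W
    have hinfle : θ.val (↥(X'' ⊓ W)) ≤ θ.val X'' := by
      by_cases hc : Submodule.comap X''.subtype (X'' ⊓ W) = ⊤
      · have h' : X'' ⊓ W = X'' :=
          le_antisymm inf_le_left (Submodule.comap_subtype_eq_top.mp hc)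
        rw [h']
      · have hq := hX''I _ hc
        rw [AuxVal.quot θ hT (inf_le_left : X'' ⊓ W ≤ X'')] at hq
        linarith only [hq]
    by_cases hb : Submodule.map X''.mkQ W = ⊥
    · have hWle : W ≤ X'' := by
        have h' := LinearMap.le_ker_iff_map.mpr hb
        rwa [Submodule.ker_mkQ] at h'
      have hinf : X'' ⊓ W = W := inf_eq_right.mpr hWle
      rw [hinf] at hinfle
      exact ⟨hinfle, fun _ => hWle⟩
    · have hβ := hX''P _ hb
      rw [hmapval θ X'' W] at hβ
      exact ⟨by linarith only [hsum, hinfle, hβ],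
        fun heq => False.elim (by linarith only [hsum, hinfle, hβ, heq])⟩
  -- θ(X'') = θ(X')
  have hX''a : θ.val X'' = θ.val X' := by
    have hle : θ.val X'' ≤ θ.val X' := (claimA X'').1
    by_cases hc : Submodule.comap X''.subtype X' = ⊤
    · have h' : X' = X'' := le_antisymm hX'leX'' (Submodule.comap_subtype_eq_top.mp hc)
      rw [h']
    · have hq := hX''I _ hc
      rw [AuxVal.quot θ hT hX'leX''] at hq
      linarith only [hle, hq]
  -- transferred hypotheses about quotients of T' and T''
  have hmin2 : ∀ N : Submodule R ↥T', Submodule.comap T'.subtype X' ≤ N → N ≠ ⊤ →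
      θ.val (↥T' ⧸ N) = 0 → 0 < η.val (↥T' ⧸ N) := by
    intro N hle hne hθ0
    have e := Submodule.quotientQuotientEquivQuotient (Submodule.comap T'.subtype X') N hle
    have hfl : IsFiniteLength R ((↥T' ⧸ Submodule.comap T'.subtype X') ⧸
        Submodule.map (Submodule.comap T'.subtype X').mkQ N) :=
      AuxFL.quot (AuxFL.quot (AuxFL.sub hT T') _) _
    have hne' : Submodule.map (Submodule.comap T'.subtype X').mkQ N ≠ ⊤ := by
      intro h
      rw [Submodule.map_mkQ_eq_top] at h
      exact hne (by rwa [sup_eq_right.mpr hle] at h)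
    have hη' := hmin _ hne' ((AuxVal.congr θ hfl e).trans hθ0)
    rwa [AuxVal.congr η hfl e] at hη'
  have hmax2 : ∀ N : Submodule R ↥T'', Submodule.comap T''.subtype X' ≤ N → N ≠ ⊤ →
      θ.val (↥T'' ⧸ N) = 0 → 0 ≤ η.val (↥T'' ⧸ N) := by
    intro N hle hne hθ0
    have e := Submodule.quotientQuotientEquivQuotient (Submodule.comap T''.subtype X') N hle
    have hfl : IsFiniteLength R ((↥T'' ⧸ Submodule.comap T''.subtype X') ⧸
        Submodule.map (Submodule.comap T''.subtype X').mkQ N) :=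
      AuxFL.quot (AuxFL.quot (AuxFL.sub hT T'') _) _
    have hne' : Submodule.map (Submodule.comap T''.subtype X').mkQ N ≠ ⊤ := by
      intro h
      rw [Submodule.map_mkQ_eq_top] at h
      exact hne (by rwa [sup_eq_right.mpr hle] at h)
    have hη' := hmax _ hne' ((AuxVal.congr θ hfl e).trans hθ0)
    rwa [AuxVal.congr η hfl e] at hη'
  -- transferred hypotheses about submodules of X''/T' and X''/T''
  have hsubTrans : ∀ (T₀ : Submodule R T), T₀ ≤ X'' → ∀ (W : Submodule R T), T₀ ≤ W → W ≤ X'' →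
      ∀ κ : AdditiveInvariant R,
        κ.val (↥(Submodule.map (Submodule.comap X''.subtype T₀).mkQ
          (Submodule.comap X''.subtype W))) = κ.val W - κ.val T₀ := by
    intro T₀ hT₀ W hTW hWX κ
    have hcc : Submodule.comap X''.subtype T₀ ≤ Submodule.comap X''.subtype W :=
      Submodule.comap_mono hTW
    rw [AuxVal.subQuot κ (AuxFL.sub hT X'') _ _, Submodule.comap_map_mkQ,
      sup_eq_right.mpr hcc, AuxVal.comapSubtype κ hT hWX, AuxVal.comapSubtype κ hT hT₀]
  have hmin'2 : ∀ W : Submodule R T, T' ≤ W → W ≤ X'' → θ.val W = θ.val T' →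
      η.val W - η.val T' ≤ 0 := by
    intro W hTW hWX hθ0
    have h := hmin' (Submodule.map (Submodule.comap X''.subtype T').mkQ
        (Submodule.comap X''.subtype W))
      (by rw [hsubTrans T' (h2.trans h3) W hTW hWX θ, hθ0, sub_self])
    rwa [hsubTrans T' (h2.trans h3) W hTW hWX η] at h
  have hmax'2 : ∀ W : Submodule R T, T'' ≤ W → W ≤ X'' → W ≠ T'' → θ.val W = θ.val T'' →
      η.val W - η.val T'' < 0 := by
    intro W hTW hWX hWne hθ0
    have hSne : Submodule.map (Submodule.comap X''.subtype T'').mkQ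
        (Submodule.comap X''.subtype W) ≠ ⊥ := by
      intro h
      apply hWne
      have hker := LinearMap.le_ker_iff_map.mpr h
      rw [Submodule.ker_mkQ] at hker
      refine le_antisymm ?_ hTW
      intro x hx
      have hx'' : x ∈ X'' := hWX hx
      have hmem : (⟨x, hx''⟩ : ↥X'') ∈ Submodule.comap X''.subtype W :=
        Submodule.mem_comap.mpr hx
      exact Submodule.mem_comap.mp (hker hmem)
    have h := hmax' (Submodule.map (Submodule.comap X''.subtype T'').mkQ
        (Submodule.comap X''.subtype W)) hSne
      (by rw [hsubTrans T'' h3 W hTW hWX θ, hθ0, sub_self])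
    rwa [hsubTrans T'' h3 W hTW hWX η] at h
  -- choose the threshold
  refine ⟨max ((C + 1) / ε) 0, fun m hm => ?_⟩
  have hm0 : 0 ≤ m := le_trans (le_max_right _ _) hm
  have hmε : C + 1 ≤ m * ε := by
    have h' := le_trans (le_max_left _ _) hm
    rw [div_le_iff₀ hε] at h'
    linarith only [h']
  have keypos : ∀ A B A' B' : Submodule R T, 0 < θ.val A - θ.val B →
      0 < m * (θ.val A - θ.val B) + (η.val A' - η.val B') := by
    intro A B A' B' hd
    have h1' := hεlb' A B hd
    have h2' := abs_le.mp (hCub' A' B')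
    have h3' : m * ε ≤ m * (θ.val A - θ.val B) := mul_le_mul_of_nonneg_left h1' hm0
    linarith only [h2'.1, h3', hmε, hC]
  have keyneg : ∀ A B A' B' : Submodule R T, θ.val A - θ.val B < 0 →
      m * (θ.val A - θ.val B) + (η.val A' - η.val B') < 0 := by
    intro A B A' B' hd
    have h1' := hεlb' B A (by linarith)
    have h2' := abs_le.mp (hCub' A' B')
    have h3' : m * ε ≤ m * (θ.val B - θ.val A) := mul_le_mul_of_nonneg_left h1' hm0
    linarith only [h2'.2, h3', hmε, hC]
  have hφval : ∀ (Q : Type u) [AddCommGroup Q] [Module R Q],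
      (AdditiveInvariant.smulAdd m θ η).val Q = m * θ.val Q + η.val Q := fun Q _ _ => rfl
  refine ⟨?_, ?_, ?_, ?_⟩
  · -- T' ∈ 𝓘_{mθ+η}
    intro N hne
    rw [hφval]
    have hθQ : θ.val (↥T' ⧸ N) = θ.val X' - θ.val (↥(Submodule.map T'.subtype N)) := by
      rw [hquotSubVal T' N θ, hθT']
    have hηQ : η.val (↥T' ⧸ N) =
        η.val T' - η.val (↥(Submodule.map T'.subtype N)) := hquotSubVal T' N η
    have hθ0 : 0 ≤ θ.val (↥T' ⧸ N) := by
      rw [hθQ]; linarith only [(claimA (Submodule.map T'.subtype N)).1]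
    rcases eq_or_lt_of_le hθ0 with h0 | hpos
    · have hXB : X' ≤ Submodule.map T'.subtype N :=
        (claimA (Submodule.map T'.subtype N)).2 (by linarith only [hθQ, h0])
      have hcle : Submodule.comap T'.subtype X' ≤ N := by
        have h' := Submodule.comap_mono (f := T'.subtype) hXB
        rwa [Submodule.comap_map_eq, Submodule.ker_subtype, sup_bot_eq] at h'
      have hη := hmin2 N hcle hne h0.symm
      rw [← h0]
      linarith only [hη]
    · rw [hθQ, hηQ]
      exact keypos X' (Submodule.map T'.subtype N) T' (Submodule.map T'.subtype N) (by linarith only [hθQ, hpos])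
  · -- T/T' ∈ 𝓟̄_{mθ+η}
    intro X _
    rw [hφval]
    have hθX : θ.val X = θ.val (Submodule.comap T'.mkQ X) - θ.val X' := by
      rw [AuxVal.subQuot θ hT T' X, hθT']
    have hηX : η.val X = η.val (Submodule.comap T'.mkQ X) - η.val T' := AuxVal.subQuot η hT T' X
    have hθle : θ.val (Submodule.comap T'.mkQ X) ≤ θ.val X' :=
      hX''a ▸ (claimB (Submodule.comap T'.mkQ X)).1
    rcases eq_or_lt_of_le hθle with heq | hlt
    · have hWX'' : Submodule.comap T'.mkQ X ≤ X'' :=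
        (claimB (Submodule.comap T'.mkQ X)).2 (heq.trans hX''a.symm)
      have hη := hmin'2 (Submodule.comap T'.mkQ X) (AuxLe.comapMkQ T' X) hWX''
        (heq.trans hθT'.symm)
      have hθX0 : θ.val X = 0 := by rw [hθX, heq, sub_self]
      rw [hθX0, hηX, mul_zero, zero_add]
      exact hη
    · rw [hθX, hηX]
      exact le_of_lt (keyneg (Submodule.comap T'.mkQ X) X' (Submodule.comap T'.mkQ X) T'
        (by linarith))
  · -- T'' ∈ 𝓘̄_{mθ+η}
    intro N hne
    rw [hφval]
    have hθQ : θ.val (↥T'' ⧸ N) = θ.val X' - θ.val (↥(Submodule.map T''.subtype N)) := by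
      rw [hquotSubVal T'' N θ, hθT'']
    have hηQ : η.val (↥T'' ⧸ N) =
        η.val T'' - η.val (↥(Submodule.map T''.subtype N)) := hquotSubVal T'' N η
    have hθ0 : 0 ≤ θ.val (↥T'' ⧸ N) := by
      rw [hθQ]; linarith only [(claimA (Submodule.map T''.subtype N)).1]
    rcases eq_or_lt_of_le hθ0 with h0 | hpos
    · have hXB : X' ≤ Submodule.map T''.subtype N :=
        (claimA (Submodule.map T''.subtype N)).2 (by linarith only [hθQ, h0])
      have hcle : Submodule.comap T''.subtype X' ≤ N := by
        have h' := Submodule.comap_mono (f := T''.subtype) hXB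
        rwa [Submodule.comap_map_eq, Submodule.ker_subtype, sup_bot_eq] at h'
      have hη := hmax2 N hcle hne h0.symm
      rw [← h0]
      linarith only [hη]
    · rw [hθQ, hηQ]
      exact le_of_lt (keypos X' (Submodule.map T''.subtype N) T'' (Submodule.map T''.subtype N)
        (by linarith only [hθQ, hpos]))
  · -- T/T'' ∈ 𝓟_{mθ+η}
    intro X hXne
    rw [hφval]
    have hθX : θ.val X = θ.val (Submodule.comap T''.mkQ X) - θ.val X' := by
      rw [AuxVal.subQuot θ hT T'' X, hθT'']
    have hηX : η.val X = η.val (Submodule.comap T''.mkQ X) - η.val T'' :=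
      AuxVal.subQuot η hT T'' X
    have hWne : Submodule.comap T''.mkQ X ≠ T'' := by
      intro h
      apply hXne
      have hX' : X = Submodule.map T''.mkQ (Submodule.comap T''.mkQ X) :=
        (Submodule.map_comap_eq_of_surjective (Submodule.mkQ_surjective T'') X).symm
      have hb : Submodule.map T''.mkQ T'' = ⊥ :=
        LinearMap.le_ker_iff_map.mp (by rw [Submodule.ker_mkQ])
      rw [hX', h, hb]
    have hθle : θ.val (Submodule.comap T''.mkQ X) ≤ θ.val X' :=
      hX''a ▸ (claimB (Submodule.comap T''.mkQ X)).1
    rcases eq_or_lt_of_le hθle with heq | hlt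
    · have hWX'' : Submodule.comap T''.mkQ X ≤ X'' :=
        (claimB (Submodule.comap T''.mkQ X)).2 (heq.trans hX''a.symm)
      have hη := hmax'2 (Submodule.comap T''.mkQ X) (AuxLe.comapMkQ T'' X) hWX'' hWne
        (heq.trans hθT''.symm)
      have hθX0 : θ.val X = 0 := by rw [hθX, heq, sub_self]
      rw [hθX0, hηX, mul_zero, zero_add]
      exact hη
    · rw [hθX, hηX]
      exact keyneg (Submodule.comap T''.mkQ X) X' (Submodule.comap T''.mkQ X) T'' (by linarith only [hlt])
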